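/- There is no continuous map f from the closed unit disc D² to itself such that z ↦ conj(f(z)) is holomorphic on the open unit disc and f(z) = z for all z with |z| = 1. -/

import Mathlib

/-- There is no continuous self-map `f` of the closed unit disc which is
antiholomorphic on the open disc (i.e. `z ↦ conj (f z)` is holomorphic there) and equals
the identity on the boundary circle. -/
theorem no_antiholomorphic_identity_on_boundary :
    ¬ ∃ f : ℂ → ℂ,
        ContinuousOn f (Metric.closedBall (0 : ℂ) 1) ∧
        Set.MapsTo f (Metric.closedBall (0 : ℂ) 1) (Metric.closedBall (0 : ℂ) 1) ∧
        DifferentiableOn ℂ (fun z => (starRingEnd ℂ) (f z)) (Metric.ball (0 : ℂ) 1) ∧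
        (∀ z : ℂ, ‖z‖ = 1 → f z = z) := by
  rintro ⟨f, hfc, -, hfd, hfb⟩
  set h : ℂ → ℂ := fun z => z * (starRingEnd ℂ) (f z) with hh
  have hball : Metric.ball (0 : ℂ) 1 ⊆ Metric.closedBall (0 : ℂ) 1 := Metric.ball_subset_closedBall
  have hdc : DiffContOnCl ℂ h (Metric.ball (0 : ℂ) 1) := by
    refine ⟨(differentiableOn_id).mul hfd, ?_⟩
    rw [closure_ball (0 : ℂ) one_ne_zero]
    exact continuousOn_id.mul ((Complex.continuous_conj.comp_continuousOn hfc))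
  have key := hdc.circleIntegral_sub_inv_smul (w := 0) (by simp)
  have h0 : h 0 = 0 := by simp [hh]
  have hsphere : Set.EqOn (fun z : ℂ => (z - 0)⁻¹ • h z) (fun z : ℂ => (z - 0)⁻¹)
      (Metric.sphere (0 : ℂ) 1) := by
    intro z hz
    have hz1 : ‖z‖ = 1 := by simpa using hz
    have hz0 : z ≠ 0 := by
      intro h'; rw [h'] at hz1; simp at hz1
    have : h z = 1 := by
      simp only [hh, hfb z hz1]
      rw [Complex.mul_conj]
      rw [← Complex.sq_norm, hz1]; norm_num
    simp [this]
  have hint : (∮ z in C(0, 1), (z - 0)⁻¹ • h z) = ∮ z in C(0, 1), (z - 0)⁻¹ :=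
    circleIntegral.integral_congr zero_le_one hsphere
  have h2 : (∮ z in C(0, 1), (z - (0:ℂ))⁻¹) = 2 * Real.pi * Complex.I :=
    circleIntegral.integral_sub_inv_of_mem_ball (by simp)
  rw [hint, h2, h0, smul_zero] at key
  have : (2 * Real.pi * Complex.I) ≠ 0 := by
    simp [Real.pi_ne_zero, Complex.I_ne_zero]
  exact this key
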